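/- Let the block matrix [[A, X],[X*, B]] in M_{2n} be positive semidefinite, with A, B, X ∈ M_n. Then for every s > 0 there exists a unitary matrix U ∈ M_n such that |X| ≤ (s/2) U* A U + (1/(2s)) B, where |X| = (X*X)^{1/2}. -/

import Mathlib

open Matrix Set ComplexOrder

variable {m : Type*}

/-- The modulus `|X| = (XᴴX)^{1/2}` of a matrix. -/
noncomputable def matAbs [Fintype m] [DecidableEq m] (X : Matrix m m ℂ) : Matrix m m ℂ :=
  (Matrix.posSemidef_conjTranspose_mul_self X).1.eigenvectorUnitary.1 *
    diagonal ((↑) ∘ (√·) ∘ (Matrix.posSemidef_conjTranspose_mul_self X).1.eigenvalues) *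
    (star (Matrix.posSemidef_conjTranspose_mul_self X).1.eigenvectorUnitary : Matrix m m ℂ)

theorem matAbs_posSemidef [Fintype m] [DecidableEq m] (X : Matrix m m ℂ) :
    (matAbs X).PosSemidef :=
  (PosSemidef.diagonal (fun i => by simp [Complex.zero_le_real])).mul_mul_conjTranspose_same _

/-- Functional calculus: apply `f : ℝ → ℝ` to a Hermitian matrix via its spectral
decomposition (junk value `0` for non-Hermitian input). -/
noncomputable def matFun [Fintype m] [DecidableEq m] (f : ℝ → ℝ) (X : Matrix m m ℂ) :
    Matrix m m ℂ :=
  if h : X.IsHermitian then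
    (h.eigenvectorUnitary : Matrix m m ℂ) *
      Matrix.diagonal (fun i => (f (h.eigenvalues i) : ℂ)) *
      star (h.eigenvectorUnitary : Matrix m m ℂ)
  else 0

/-- Real part `Re A = (A + Aᴴ)/2`. -/
noncomputable def reM (A : Matrix m m ℂ) : Matrix m m ℂ := (1/2 : ℂ) • (A + Aᴴ)

/-- Imaginary part `Im A = (A - Aᴴ)/(2i)`. -/
noncomputable def imM (A : Matrix m m ℂ) : Matrix m m ℂ := (1/(2*Complex.I)) • (A - Aᴴ)

/-- Numerical range `W(A) = {x* A x : x*x = 1}`. -/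
def numRange [Fintype m] (A : Matrix m m ℂ) : Set ℂ :=
  {z | ∃ x : m → ℂ, star x ⬝ᵥ x = 1 ∧ z = star x ⬝ᵥ A.mulVec x}

/-- The sector `S_α = {z : Re z ≥ 0, |Im z| ≤ (Re z) tan α}`. -/
def sector (α : ℝ) : Set ℂ := {z | 0 ≤ z.re ∧ |z.im| ≤ z.re * Real.tan α}

open scoped InnerProductSpace in
lemma exists_polar {n : ℕ} (X : Matrix (Fin n) (Fin n) ℂ) :
    ∃ U ∈ Matrix.unitaryGroup (Fin n) ℂ, X = U * matAbs X := by
  classical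
  set P := matAbs X with hPdef
  have hPP : P * P = Xᴴ * X := by
    have hX := Matrix.posSemidef_conjTranspose_mul_self X
    have hQ := Unitary.coe_star_mul_self hX.1.eigenvectorUnitary
    conv_rhs => rw [hX.1.spectral_theorem, Unitary.conjStarAlgAut_apply]
    rw [hPdef, matAbs]
    simp only [Matrix.mul_assoc] at hQ ⊢
    rw [← Matrix.mul_assoc (star _ : Matrix (Fin n) (Fin n) ℂ) _ (Matrix.diagonal _ * _), hQ,
      Matrix.one_mul, ← Matrix.mul_assoc (Matrix.diagonal _) (Matrix.diagonal _),
      Matrix.diagonal_mul_diagonal]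
    congr 3
    funext i
    simp only [Function.comp_apply, ← Complex.ofReal_mul,
      Real.mul_self_sqrt (hX.eigenvalues_nonneg i)]
    rfl
  have hPH : star P = P := (matAbs_posSemidef X).1
  set φ := Matrix.toEuclideanCLM (n := Fin n) (𝕜 := ℂ) with hφ
  set V := EuclideanSpace ℂ (Fin n)
  set XL : V →ₗ[ℂ] V := (φ X : V →ₗ[ℂ] V) with hXL
  set PL : V →ₗ[ℂ] V := (φ P : V →ₗ[ℂ] V) with hPL
  have key : ∀ v : V, ⟪φ X v, φ X v⟫_ℂ = ⟪φ P v, φ P v⟫_ℂ := by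
    intro v
    have hX : ⟪φ X v, φ X v⟫_ℂ = ⟪v, φ (Xᴴ * X) v⟫_ℂ := by
      rw [_root_.map_mul, ContinuousLinearMap.mul_apply, ← Matrix.star_eq_conjTranspose,
        map_star, ContinuousLinearMap.star_eq_adjoint, ContinuousLinearMap.adjoint_inner_right]
    have hP : ⟪φ P v, φ P v⟫_ℂ = ⟪v, φ (star P * P) v⟫_ℂ := by
      rw [_root_.map_mul, map_star, ContinuousLinearMap.mul_apply,
        ContinuousLinearMap.star_eq_adjoint, ContinuousLinearMap.adjoint_inner_right]
    rw [hX, hP, hPH, hPP]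
  have hnorm : ∀ v : V, ‖XL v‖ = ‖PL v‖ := by
    intro v
    have h1 := key v
    rw [inner_self_eq_norm_sq_to_K (𝕜 := ℂ), inner_self_eq_norm_sq_to_K (𝕜 := ℂ)] at h1
    have h2 : (‖φ X v‖ : ℝ) ^ 2 = (‖φ P v‖ : ℝ) ^ 2 := by exact_mod_cast h1
    have h3 := congrArg Real.sqrt h2
    have h4 : ‖φ X v‖ = ‖φ P v‖ := by simpa [Real.sqrt_sq, norm_nonneg] using h3
    exact h4
  have hker : LinearMap.ker PL ≤ LinearMap.ker XL := by
    intro v hv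
    rw [LinearMap.mem_ker] at hv ⊢
    have h1 := hnorm v
    rw [hv, norm_zero] at h1
    exact norm_eq_zero.mp h1
  set f0 : (V ⧸ LinearMap.ker PL) →ₗ[ℂ] V := Submodule.liftQ _ XL hker with hf0
  set e := PL.quotKerEquivRange with he
  set f : LinearMap.range PL →ₗ[ℂ] V :=
    f0 ∘ₗ (e.symm : LinearMap.range PL →ₗ[ℂ] V ⧸ LinearMap.ker PL) with hfdef
  have hf : ∀ v : V, f ⟨PL v, LinearMap.mem_range_self PL v⟩ = XL v := by
    intro v
    have h1 : e.symm ⟨PL v, LinearMap.mem_range_self PL v⟩ = (LinearMap.ker PL).mkQ v :=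
      PL.quotKerEquivRange_symm_apply_image v _
    rw [hfdef]
    simp only [LinearMap.coe_comp, LinearEquiv.coe_coe, Function.comp_apply, h1]
    exact Submodule.liftQ_apply _ XL v
  have hnm : ∀ s : LinearMap.range PL, ‖f s‖ = ‖(s : V)‖ := by
    rintro ⟨-, v, rfl⟩
    rw [hf v]
    exact hnorm v
  set L : LinearMap.range PL →ₗᵢ[ℂ] V := ⟨f, hnm⟩ with hL
  set Uiso := L.extend with hUiso
  set U := φ.symm Uiso.toContinuousLinearMap with hU
  have hUφ : φ U = Uiso.toContinuousLinearMap := φ.apply_symm_apply _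
  have hUP : ∀ v : V, Uiso (PL v) = XL v := by
    intro v
    have h1 := L.extend_apply ⟨PL v, LinearMap.mem_range_self PL v⟩
    rw [← hUiso] at h1
    rw [h1, hL]
    exact hf v
  have hX : X = U * P := by
    refine φ.injective ?_
    show φ X = φ (U * P)
    rw [_root_.map_mul, hUφ]
    refine ContinuousLinearMap.ext fun v => ?_
    rw [ContinuousLinearMap.mul_apply, LinearIsometry.coe_toContinuousLinearMap]
    exact (hUP v).symm
  have h1 : star U * U = 1 := by
    refine φ.injective ?_
    show φ (star U * U) = φ 1
    rw [_root_.map_mul, map_star, hUφ, _root_.map_one]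
    refine ContinuousLinearMap.ext fun v => ?_
    rw [ContinuousLinearMap.mul_apply, ContinuousLinearMap.star_eq_adjoint,
      ContinuousLinearMap.one_apply]
    refine ext_inner_right ℂ fun y => ?_
    rw [ContinuousLinearMap.adjoint_inner_left]
    simp only [LinearIsometry.coe_toContinuousLinearMap]
    exact Uiso.inner_map_map v y
  exact ⟨U, Matrix.mem_unitaryGroup_iff.mpr (mul_eq_one_comm.mp h1), hX⟩

theorem block_psd_abs_le_left {n : ℕ} (A B X : Matrix (Fin n) (Fin n) ℂ)
    (h : (Matrix.fromBlocks A X Xᴴ B).PosSemidef) :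
    ∀ s : ℝ, 0 < s → ∃ U ∈ Matrix.unitaryGroup (Fin n) ℂ,
      ((s/2) • (Uᴴ * A * U) + (1/(2*s)) • B - matAbs X).PosSemidef := by
  intro s hs
  obtain ⟨U, hU, hXUP⟩ := exists_polar X
  refine ⟨U, hU, ?_⟩
  set P := matAbs X with hPdef
  have hPH : Pᴴ = P := (matAbs_posSemidef X).1
  have hUU : Uᴴ * U = 1 := by
    rw [← Matrix.star_eq_conjTranspose]
    exact Matrix.mem_unitaryGroup_iff'.mp hU
  have hAH : A.IsHermitian := (Matrix.isHermitian_fromBlocks_iff.mp h.1).1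
  have hBH : B.IsHermitian := (Matrix.isHermitian_fromBlocks_iff.mp h.1).2.2.2
  have hrs : ∀ (r : ℝ) (M : Matrix (Fin n) (Fin n) ℂ), r • M = (r : ℂ) • M := by
    intro r M; ext i j; simp [Complex.real_smul]
  rw [hrs, hrs]
  have hs' : (s : ℂ) ≠ 0 := by exact_mod_cast hs.ne'
  rw [Matrix.posSemidef_iff_dotProduct_mulVec]
  constructor
  · have h1 : (Uᴴ * A * U).IsHermitian := Matrix.isHermitian_conjTranspose_mul_mul U hAH
    have hsm : ∀ (r : ℝ) (M : Matrix (Fin n) (Fin n) ℂ),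
        M.IsHermitian → ((r : ℂ) • M).IsHermitian := by
      intro r M hM
      rw [Matrix.IsHermitian, Matrix.conjTranspose_smul, Complex.star_def,
        Complex.conj_ofReal, hM.eq]
    exact ((hsm _ _ h1).add (hsm _ _ hBH)).sub (matAbs_posSemidef X).1
  · intro v
    set w := U.mulVec v with hw
    set a := star w ⬝ᵥ A.mulVec w with ha
    set b := star v ⬝ᵥ B.mulVec v with hb
    set p := star v ⬝ᵥ P.mulVec v with hp
    have f1 : star v ⬝ᵥ (Uᴴ * A * U).mulVec v = a := by
      rw [ha, hw, Matrix.star_mulVec, ← Matrix.dotProduct_mulVec, Matrix.mulVec_mulVec,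
        Matrix.mulVec_mulVec]
    have f2 : star w ⬝ᵥ X.mulVec v = p := by
      rw [hp, hw, Matrix.star_mulVec, ← Matrix.dotProduct_mulVec, Matrix.mulVec_mulVec, hXUP,
        ← mul_assoc, hUU, one_mul]
    have f3 : star v ⬝ᵥ Xᴴ.mulVec w = p := by
      have hXH : Xᴴ = P * Uᴴ := by rw [hXUP, Matrix.conjTranspose_mul, hPH]
      rw [hp, hXH, hw, Matrix.mulVec_mulVec, mul_assoc, hUU, mul_one]
    set z : (Fin n ⊕ Fin n) → ℂ := Sum.elim ((s : ℂ) • w) (-v) with hz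
    have hq := h.dotProduct_mulVec_nonneg z
    have hstarz : star z = Sum.elim ((s : ℂ) • star w) (-(star v)) := by
      funext i
      cases i <;> simp [hz, Complex.conj_ofReal, mul_comm]
    have e2 : star z ⬝ᵥ (Matrix.fromBlocks A X Xᴴ B).mulVec z
        = (s : ℂ) ^ 2 * a - 2 * s * p + b := by
      rw [hstarz, hz, Matrix.fromBlocks_mulVec, sumElim_dotProduct_sumElim]
      simp only [Sum.elim_comp_inl, Sum.elim_comp_inr, Matrix.mulVec_smul, Matrix.mulVec_neg,
        dotProduct_add, dotProduct_neg, neg_dotProduct, dotProduct_smul, smul_dotProduct,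
        smul_eq_mul, smul_neg, dotProduct_sub, neg_neg]
      rw [f2, f3, ← ha, ← hb]
      ring
    have e1 : star v ⬝ᵥ (((s / 2 : ℝ) : ℂ) • (Uᴴ * A * U) + ((1 / (2 * s) : ℝ) : ℂ) • B
        - P).mulVec v = ((s / 2 : ℝ) : ℂ) * a + ((1 / (2 * s) : ℝ) : ℂ) * b - p := by
      simp only [Matrix.sub_mulVec, Matrix.add_mulVec, Matrix.smul_mulVec,
        dotProduct_sub, dotProduct_add, dotProduct_smul, smul_eq_mul]
      rw [f1, ← hb, ← hp]
    have goal_eq : star v ⬝ᵥ (((s / 2 : ℝ) : ℂ) • (Uᴴ * A * U) + ((1 / (2 * s) : ℝ) : ℂ) • B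
        - P).mulVec v = ((1 / (2 * s) : ℝ) : ℂ) * (star z ⬝ᵥ (Matrix.fromBlocks A X Xᴴ B).mulVec z) := by
      rw [e1, e2]
      push_cast
      field_simp
      ring
    rw [goal_eq]
    refine mul_nonneg ?_ hq
    rw [Complex.zero_le_real]
    positivity
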